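/- Let (V,ω) be a finite-dimensional real symplectic vector space (ω a nondegenerate skew-symmetric bilinear form) with dim V ≥ 4. Let φ : V → End(V) be a linear map such that every operator φ(z) is conformally symplectic, i.e., for each z ∈ V there exists a constant c(z) ∈ ℝ with ω(φ(z)a, b) + ω(a, φ(z)b) = c(z)·ω(a,b) for all a,b ∈ V. Suppose there exists v ∈ V with φ(a)b − φ(b)a = ω(a,b)·v for all a,b ∈ V. Then for every z ∈ V one has ω(φ(z)a, b) + ω(a, φ(z)b) = ω(v,z)·ω(a,b) for all a,b ∈ V; that is, the conformal factor of φ(z) equals ω(v,z). (This is the key step showing that a degree-one map satisfying the Tanaka prolongation condition on g₋₁ automatically satisfies it on all of the Heisenberg algebra g₋₂ ⊕ g₋₁.) -/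

import Mathlib

/-- Let `(V, ω)` be a real symplectic vector space with `dim V ≥ 4`,
and let `φ : V → End(V)` be linear with each `φ z` conformally symplectic.  If there is
`v ∈ V` with `φ(a)b − φ(b)a = ω(a,b) • v` for all `a, b`, then the conformal factor of
`φ z` equals `ω(v, z)` for every `z`. -/
theorem stmt_2 (V : Type*) [AddCommGroup V] [Module ℝ V] [FiniteDimensional ℝ V]
    (hdim : 4 ≤ Module.finrank ℝ V)
    (ω : V →ₗ[ℝ] V →ₗ[ℝ] ℝ) (hskew : ∀ x y : V, ω x y = - ω y x)
    (hnd : ∀ x : V, (∀ y : V, ω x y = 0) → x = 0)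
    (φ : V →ₗ[ℝ] (V →ₗ[ℝ] V))
    (hconf : ∀ z : V, ∃ c : ℝ, ∀ a b : V, ω (φ z a) b + ω a (φ z b) = c * ω a b)
    (v : V) (hv : ∀ a b : V, φ a b - φ b a = ω a b • v) :
    ∀ z a b : V, ω (φ z a) b + ω a (φ z b) = ω v z * ω a b := by
  have key : ∀ z : V, ∃ p q : V, ω z p = 0 ∧ ω z q = 0 ∧ ω p q ≠ 0 := by
    intro z
    by_contra h
    push_neg at h
    by_cases hz : z = 0
    · subst hz
      have hall : ∀ x : V, x = 0 := fun x =>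
        hnd x (fun y => h x y (by simp) (by simp))
      haveI : Subsingleton V := ⟨fun a b => by rw [hall a, hall b]⟩
      have : Module.finrank ℝ V = 0 := Module.finrank_zero_of_subsingleton
      omega
    · obtain ⟨u, hu⟩ : ∃ u, ω z u ≠ 0 := by
        by_contra hc
        push_neg at hc
        exact hz (hnd z hc)
      set K := LinearMap.ker (ω z) with hK
      have hK1 : ∀ a : V, ω z a = 0 → ω a u = 0 → a = 0 := by
        intro a ha hau
        apply hnd
        intro w
        have hw' : ω z (w - (ω z w / ω z u) • u) = 0 := by
          simp [map_sub, map_smul, smul_eq_mul]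
          field_simp
          ring
        have h1 : ω a (w - (ω z w / ω z u) • u) = 0 := h a _ ha hw'
        have : ω a w - (ω z w / ω z u) * ω a u = 0 := by
          simpa [map_sub, map_smul, smul_eq_mul] using h1
        rw [hau] at this
        linarith
      have hfin : Module.finrank ℝ K ≤ 1 := by
        have hinj : Function.Injective ((ω.flip u).comp K.subtype) := by
          rw [← LinearMap.ker_eq_bot]
          rw [LinearMap.ker_eq_bot']
          intro m hm
          have : ω (m : V) u = 0 := hm
          exact Subtype.ext (hK1 m m.2 this)
        calc Module.finrank ℝ K ≤ Module.finrank ℝ ℝ :=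
              LinearMap.finrank_le_finrank_of_injective hinj
          _ = 1 := Module.finrank_self ℝ
      have hrange : Module.finrank ℝ (LinearMap.range (ω z)) ≤ 1 := by
        calc Module.finrank ℝ (LinearMap.range (ω z)) ≤ Module.finrank ℝ ℝ :=
              Submodule.finrank_le _
          _ = 1 := Module.finrank_self ℝ
      have hsum := LinearMap.finrank_range_add_finrank_ker (ω z)
      rw [← hK] at hsum
      omega
  intro z a b
  obtain ⟨p, q, hzp, hzq, hpq⟩ := key z
  obtain ⟨cz, hcz⟩ := hconf z
  have A1 := hcz p q
  obtain ⟨cp, hcp⟩ := hconf p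
  have A2 := hcp z q
  obtain ⟨cq, hcq⟩ := hconf q
  have A3 := hcq p z
  have B1 : ω (φ z p) q - ω (φ p z) q = ω z p * ω v q := by
    have := congrArg (fun w => ω w q) (hv z p)
    simpa [map_sub, LinearMap.sub_apply, map_smul, LinearMap.smul_apply, smul_eq_mul] using this
  have B2 : ω p (φ z q) - ω p (φ q z) = ω z q * ω p v := by
    have := congrArg (fun w => ω p w) (hv z q)
    simpa [map_sub, map_smul, smul_eq_mul, mul_comm] using this
  have B3 : ω z (φ p q) - ω z (φ q p) = ω p q * ω z v := by
    have := congrArg (fun w => ω z w) (hv p q)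
    simpa [map_sub, map_smul, smul_eq_mul, mul_comm] using this
  have hcz_eq : cz = ω v z := by
    have hm : cz * ω p q = ω v z * ω p q := by
      have S1 := hskew (φ q p) z
      have S2 := hskew z v
      have S3 := hskew p z
      linear_combination -A1 + B1 + B2 + A2 + A3 - S1 - B3 - ω p q * S2 + cq * S3
        + (ω v q - cq) * hzp + (cp + ω p v) * hzq
    exact mul_right_cancel₀ hpq hm
  rw [← hcz_eq]
  exact hcz a b
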